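/- Abstract semismooth Newton convergence: let F: X → Z between Banach spaces be Newton differentiable in an open neighborhood U of a root u (F[u] = 0), with Newton derivative D_N F. If for every ũ ∈ U all D ∈ D_N F[ũ] are boundedly invertible with uniformly bounded inverses, then the iteration u_{n+1} = u_n − D_n⁻¹ F[u_n] with any D_n ∈ D_N F[u_n] converges superlinearly to u provided u_0 is sufficiently close to u, i.e., ‖u_{n+1} − u‖/‖u_n − u‖ → 0. -/
import Mathlib


open Filter

/-- **Superlinear convergence of the semismooth Newton method** (Statement 13).
Let `F : X → Z` between Banach spaces be Newton differentiable on an open neighborhood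
`U` of a root `u` (`F u = 0`), with Newton derivative `DN` having nonempty values. If all
Newton derivatives at points of `U` are invertible with inverses uniformly bounded by
`M`, then the semismooth Newton iteration `u_{n+1} = u_n − D_n⁻¹ F[u_n]`,
`D_n ∈ DN (u_n)`, converges superlinearly to `u` provided `u₀` is close enough to `u`. -/
theorem semismooth_newton_superlinear_convergence
    {X Z : Type*} [NormedAddCommGroup X] [NormedSpace ℝ X] [CompleteSpace X]
    [NormedAddCommGroup Z] [NormedSpace ℝ Z] [CompleteSpace Z]
    (F : X → Z) (u : X) (U : Set X) (hU : IsOpen U) (huU : u ∈ U)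
    (hroot : F u = 0)
    (DN : X → Set (X →L[ℝ] Z))
    (hne : ∀ x ∈ U, (DN x).Nonempty)
    -- Newton differentiability at points near u:
    -- sup_{D ∈ DN (x+e)} ‖F(x+e) − F x − D e‖ = o(‖e‖)
    (hsemi : ∀ x ∈ U, ∀ ε > (0:ℝ), ∃ δ > (0:ℝ), ∀ e : X, ‖e‖ < δ → x + e ∈ U →
      ∀ D ∈ DN (x + e), ‖F (x + e) - F x - D e‖ ≤ ε * ‖e‖)
    (M : ℝ)
    -- every Newton derivative on U is boundedly invertible, uniformly:
    (hinv : ∀ x ∈ U, ∀ D ∈ DN x, ∃ Dinv : Z →L[ℝ] X,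
      (∀ z, D (Dinv z) = z) ∧ (∀ y, Dinv (D y) = y) ∧ ‖Dinv‖ ≤ M) :
    ∃ δ > (0:ℝ), ∀ u₀ : X, ‖u₀ - u‖ < δ →
      ∀ useq : ℕ → X, useq 0 = u₀ →
      (∀ k, ∃ D ∈ DN (useq k), ∃ Dinv : Z →L[ℝ] X,
        (∀ z, D (Dinv z) = z) ∧ (∀ y, Dinv (D y) = y) ∧
        useq (k + 1) = useq k - Dinv (F (useq k))) →
      Tendsto useq atTop (nhds u) ∧
      (∀ ε > (0:ℝ), ∃ N, ∀ k ≥ N, ‖useq (k + 1) - u‖ ≤ ε * ‖useq k - u‖) := by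
  have hM0 : 0 ≤ M := by
    obtain ⟨D, hD⟩ := hne u huU
    obtain ⟨Dinv, _, _, hle⟩ := hinv u huU D hD
    exact (norm_nonneg Dinv).trans hle
  have hε₀pos : (0:ℝ) < 1 / (2 * (M + 1)) := by positivity
  obtain ⟨δ₁, hδ₁pos, hδ₁⟩ := hsemi u huU (1 / (2 * (M + 1))) hε₀pos
  obtain ⟨δ₂, hδ₂pos, hδ₂⟩ := Metric.isOpen_iff.mp hU u huU
  refine ⟨min δ₁ δ₂, lt_min hδ₁pos hδ₂pos, ?_⟩
  intro u₀ hu₀ useq h0 hstep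
  have hmem : ∀ x : X, ‖x - u‖ < δ₂ → x ∈ U := by
    intro x hx
    apply hδ₂
    simpa [Metric.mem_ball, dist_eq_norm] using hx
  have key : ∀ ε' δ', (∀ e : X, ‖e‖ < δ' → u + e ∈ U → ∀ D ∈ DN (u + e),
        ‖F (u + e) - F u - D e‖ ≤ ε' * ‖e‖) →
      ∀ k, ‖useq k - u‖ < δ' → useq k ∈ U →
        ‖useq (k+1) - u‖ ≤ M * ε' * ‖useq k - u‖ := by
    intro ε' δ' hδ' k hk hkU
    obtain ⟨D, hD, Dinv, hDr, hDl, hrec⟩ := hstep k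
    have hue : u + (useq k - u) = useq k := by abel
    have hres : ‖F (useq k) - D (useq k - u)‖ ≤ ε' * ‖useq k - u‖ := by
      have := hδ' (useq k - u) hk (by rw [hue]; exact hkU) D (by rw [hue]; exact hD)
      rw [hue] at this
      simpa [hroot] using this
    obtain ⟨Dinv', hDr', hDl', hM'⟩ := hinv (useq k) hkU D hD
    have hsame : Dinv (F (useq k) - D (useq k - u)) = Dinv' (F (useq k) - D (useq k - u)) := by
      have h1 := hDl' (Dinv (F (useq k) - D (useq k - u)))
      rw [hDr] at h1
      exact h1.symm
    have heq : useq (k+1) - u = - Dinv (F (useq k) - D (useq k - u)) := by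
      rw [hrec, map_sub, hDl]
      abel
    calc ‖useq (k+1) - u‖ = ‖Dinv' (F (useq k) - D (useq k - u))‖ := by
          rw [heq, norm_neg, hsame]
      _ ≤ ‖Dinv'‖ * ‖F (useq k) - D (useq k - u)‖ := Dinv'.le_opNorm _
      _ ≤ M * (ε' * ‖useq k - u‖) :=
          mul_le_mul hM' hres (norm_nonneg _) hM0
      _ = M * ε' * ‖useq k - u‖ := by ring
  have hhalf : M * (1 / (2 * (M + 1))) ≤ 1 / 2 := by
    rw [mul_one_div, div_le_div_iff₀ (by positivity) (by norm_num : (0:ℝ) < 2)]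
    nlinarith
  have hbound : ∀ k, ‖useq k - u‖ ≤ (1/2 : ℝ)^k * ‖u₀ - u‖ := by
    intro k
    induction k with
    | zero => simp [h0]
    | succ k ih =>
      have hlt : ‖useq k - u‖ < min δ₁ δ₂ := by
        calc ‖useq k - u‖ ≤ (1/2:ℝ)^k * ‖u₀ - u‖ := ih
          _ ≤ 1 * ‖u₀ - u‖ := by
              apply mul_le_mul_of_nonneg_right _ (norm_nonneg _)
              exact pow_le_one₀ (by norm_num) (by norm_num)
          _ = ‖u₀ - u‖ := one_mul _
          _ < min δ₁ δ₂ := hu₀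
      have hkU : useq k ∈ U := hmem _ (hlt.trans_le (min_le_right _ _))
      have := key _ _ hδ₁ k (hlt.trans_le (min_le_left _ _)) hkU
      calc ‖useq (k+1) - u‖ ≤ M * (1 / (2 * (M + 1))) * ‖useq k - u‖ := this
        _ ≤ (1/2) * ‖useq k - u‖ :=
            mul_le_mul_of_nonneg_right hhalf (norm_nonneg _)
        _ ≤ (1/2) * ((1/2:ℝ)^k * ‖u₀ - u‖) := by
            apply mul_le_mul_of_nonneg_left ih; norm_num
        _ = (1/2:ℝ)^(k+1) * ‖u₀ - u‖ := by ring
  have htend0 : Tendsto (fun k => ‖useq k - u‖) atTop (nhds 0) := by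
    apply squeeze_zero (fun k => norm_nonneg _) hbound
    have : Tendsto (fun k : ℕ => (1/2:ℝ)^k) atTop (nhds 0) :=
      tendsto_pow_atTop_nhds_zero_of_lt_one (by norm_num) (by norm_num)
    simpa using this.mul_const ‖u₀ - u‖
  have htend : Tendsto useq atTop (nhds u) :=
    tendsto_iff_norm_sub_tendsto_zero.mpr htend0
  refine ⟨htend, ?_⟩
  intro ε hε
  have hε'pos : (0:ℝ) < ε / (M + 1) := by positivity
  obtain ⟨δ', hδ'pos, hδ'⟩ := hsemi u huU (ε / (M + 1)) hε'pos
  have hev : ∀ᶠ k in atTop, ‖useq k - u‖ < min δ' δ₂ :=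
    htend0.eventually (gt_mem_nhds (lt_min hδ'pos hδ₂pos))
  obtain ⟨N, hN⟩ := hev.exists_forall_of_atTop
  refine ⟨N, fun k hk => ?_⟩
  have hlt := hN k hk
  have hkU : useq k ∈ U := hmem _ (hlt.trans_le (min_le_right _ _))
  have := key _ _ hδ' k (hlt.trans_le (min_le_left _ _)) hkU
  calc ‖useq (k+1) - u‖ ≤ M * (ε / (M + 1)) * ‖useq k - u‖ := this
    _ ≤ ε * ‖useq k - u‖ := by
        apply mul_le_mul_of_nonneg_right _ (norm_nonneg _)
        calc M * (ε / (M + 1)) = M * ε / (M + 1) := by ring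
          _ ≤ ε := (div_le_iff₀ (by positivity : (0:ℝ) < M + 1)).mpr (by nlinarith)
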